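/- Let g : [0,∞) → ℝ be continuously differentiable and solve the HJB equation. Then g'(x) ≥ 1 for all x ≥ 0 (in particular g is strictly increasing), and g(x) ≥ c/(λ+δ) > 0 for all x ≥ 0. -/

import Mathlib

open Real Set MeasureTheory

/-- Any continuously differentiable solution `g` of the HJB equation
satisfies `g' ≥ 1` (hence is strictly increasing) and is bounded below by
`c / (λ + δ) > 0`. -/
theorem hjb_solution_monotone_and_bounded_below
    (c lam δ β φ : ℝ) (hc : 0 < c) (hlam : 0 < lam) (hδ : 0 < δ)
    (hβ : 0 ≤ β) (hφ : 1 ≤ φ)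
    (μ : Measure ℝ) [IsProbabilityMeasure μ] (hμ : μ (Set.Iic 0) = 0)
    (g : ℝ → ℝ) (hg : ContDiffOn ℝ 1 g (Set.Ici 0))
    (hHJB : ∀ x ≥ (0:ℝ),
      (1 - derivWithin g (Set.Ici 0) x ≤ 0 ∧
        c * derivWithin g (Set.Ici 0) x - (lam + δ) * g x
          + lam * ∫ y in Set.Ioc 0 x, g (x - y) ∂μ
          + β * sSup {z : ℝ | ∃ f ≥ (0:ℝ), z = g (x + f) - g x - φ * f} ≤ 0) ∧
      (1 - derivWithin g (Set.Ici 0) x = 0 ∨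
        c * derivWithin g (Set.Ici 0) x - (lam + δ) * g x
          + lam * ∫ y in Set.Ioc 0 x, g (x - y) ∂μ
          + β * sSup {z : ℝ | ∃ f ≥ (0:ℝ), z = g (x + f) - g x - φ * f} = 0)) :
    (∀ x ≥ (0:ℝ), 1 ≤ derivWithin g (Set.Ici 0) x) ∧
    StrictMonoOn g (Set.Ici 0) ∧
    (∀ x ≥ (0:ℝ), c / (lam + δ) ≤ g x) ∧
    0 < c / (lam + δ) := by
  have hd : ∀ x ≥ (0:ℝ), 1 ≤ derivWithin g (Set.Ici 0) x := by
    intro x hx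
    have := (hHJB x hx).1.1
    linarith
  have hdiff : DifferentiableOn ℝ g (Set.Ici 0) := hg.differentiableOn one_ne_zero
  have hmono : StrictMonoOn g (Set.Ici 0) := by
    apply strictMonoOn_of_hasDerivWithinAt_pos (convex_Ici 0) hg.continuousOn
      (f' := derivWithin g (Set.Ici 0))
    · intro x hx
      rw [interior_Ici] at hx
      exact ((hdiff x (Set.mem_Ici.mpr (le_of_lt hx))).hasDerivWithinAt).mono
        (by rw [interior_Ici]; exact Ioi_subset_Ici le_rfl)
    · intro x hx
      rw [interior_Ici] at hx
      linarith [hd x (le_of_lt hx)]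
  have hpos : 0 < c / (lam + δ) := div_pos hc (by linarith)
  -- supremum term is nonneg at any x ≥ 0
  have hsup : ∀ x : ℝ, 0 ≤ sSup {z : ℝ | ∃ f ≥ (0:ℝ), z = g (x + f) - g x - φ * f} := by
    intro x
    apply Real.sSup_nonneg'
    exact ⟨0, ⟨0, le_rfl, by simp⟩, le_rfl⟩
  have hg0 : c / (lam + δ) ≤ g 0 := by
    have h0 := (hHJB 0 le_rfl).1.2
    have hint : (∫ y in Set.Ioc (0:ℝ) 0, g (0 - y) ∂μ) = 0 := by simp
    rw [hint] at h0
    have hd0 := hd 0 le_rfl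
    have hs := hsup 0
    rw [div_le_iff₀ (by linarith : (0:ℝ) < lam + δ)]
    nlinarith
  refine ⟨hd, hmono, ?_, hpos⟩
  intro x hx
  have : g 0 ≤ g x := by
    rcases eq_or_lt_of_le hx with h | h
    · rw [← h]
    · exact le_of_lt (hmono (Set.mem_Ici.mpr le_rfl) (Set.mem_Ici.mpr hx) h)
  linarith
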